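/- Fix k ≥ 1 and 0 ≤ i ≤ k. Consequently, in A = ℂ[x₁, x₂, …] there exist a nonzero scalar γ ∈ ℂ and b ∈ A such that x₂^{k-i+1}·x₁^{i} = γ·R⁰_{k,2k-i+2} + b·x₁^{i+1}. -/

import Mathlib

open MvPolynomial

noncomputable section

abbrev A : Type := MvPolynomial ℕ+ ℂ

/-- weight function: `x_m` has weight `m`. -/
def wtA : ℕ+ → ℕ := fun m => (m : ℕ)

/-- the index-shift map `τ : x_m ↦ x_{m+1}` (multiplicative on monomials). -/
def tau : A →ₐ[ℂ] A := rename (fun m => m + 1)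

/-- `B = ℂ[x₂, x₃, …]`, the subalgebra generated by the variables `x_m`, `m ≥ 2`. -/
def BB : Subalgebra ℂ A := Algebra.adjoin ℂ {p : A | ∃ m : ℕ+, 2 ≤ m ∧ p = X m}

/-- `R⁰_{k,t}`: sum over ordered `(k+1)`-tuples of integers `≥ 1` summing to `t`. -/
def R0 (k t : ℕ) : A :=
  ∑ m ∈ (Finset.Nat.antidiagonalTuple (k+1) t).filter (fun m => ∀ i, 1 ≤ m i),
    ∏ i, X ((m i).toPNat')

/-- `R¹_{k,t}`: sum over ordered `(k+1)`-tuples of integers `≥ 2` summing to `t`. -/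
def R1 (k t : ℕ) : A :=
  ∑ m ∈ (Finset.Nat.antidiagonalTuple (k+1) t).filter (fun m => ∀ i, 2 ≤ m i),
    ∏ i, X ((m i).toPNat')

/-- the projection `ρ : A → B` along `A·x₁` (set `x₁ = 0`). -/
def rho : A →ₐ[ℂ] A := aeval (fun m : ℕ+ => if m = 1 then 0 else X m)

/-- `I_{k,0} = Σ_{t ≥ k+1} A·R⁰_{k,t}`. -/
def Ik0 (k : ℕ) : Ideal A := Ideal.span {p : A | ∃ t, k + 1 ≤ t ∧ p = R0 k t}

/-- `I_{k,i} = Σ_{t ≥ k+1} A·R⁰_{k,t} + A·x₁^{k-i+1}`. -/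
def Ik (k i : ℕ) : Ideal A := Ik0 k ⊔ Ideal.span {X 1 ^ (k - i + 1)}

/-- `I'_{k,k} = Σ_{t ≥ 2(k+1)} B·R¹_{k,t}` as a ℂ-subspace of `A`. -/
def Ipkk (k : ℕ) : Submodule ℂ A :=
  Submodule.span ℂ {p : A | ∃ t, 2*(k+1) ≤ t ∧ ∃ b ∈ BB, p = b * R1 k t}

end
/-- `x₂^{k-i+1}·x₁^i = γ·R⁰_{k,2k-i+2} + b·x₁^{i+1}` for some
nonzero scalar `γ` and some `b ∈ A`. -/
theorem stmt9 (k i : ℕ) (hk : 1 ≤ k) (hi : i ≤ k) :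
    ∃ γ : ℂ, γ ≠ 0 ∧ ∃ b : A,
      X 2 ^ (k - i + 1) * X 1 ^ i = γ • R0 k (2*k + 2 - i) + b * X 1 ^ (i + 1) := by
  classical
  set t := 2*k + 2 - i with ht
  set S := (Finset.Nat.antidiagonalTuple (k+1) t).filter (fun m => ∀ i, 1 ≤ m i) with hS
  set c : (Fin (k+1) → ℕ) → ℕ := fun m => (Finset.univ.filter (fun j => m j = 1)).card with hc
  have hmem : ∀ m ∈ S, (∑ j, m j = t) ∧ ∀ j, 1 ≤ m j := by
    intro m hm
    rw [hS, Finset.mem_filter, Finset.Nat.mem_antidiagonalTuple] at hm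
    exact hm
  have hsplit : ∀ m : Fin (k+1) → ℕ,
      (∑ j ∈ Finset.univ.filter (fun j => m j = 1), m j)
      + (∑ j ∈ Finset.univ.filter (fun j => ¬ m j = 1), m j) = ∑ j, m j :=
    fun m => Finset.sum_filter_add_sum_filter_not _ _ _
  have hones_sum : ∀ m : Fin (k+1) → ℕ,
      ∑ j ∈ Finset.univ.filter (fun j => m j = 1), m j = c m := by
    intro m
    rw [Finset.sum_congr rfl (fun j hj => (Finset.mem_filter.mp hj).2)]
    simp [hc]
  have hcle : ∀ m : Fin (k+1) → ℕ, c m ≤ k + 1 := by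
    intro m
    simpa [hc] using Finset.card_filter_le (Finset.univ : Finset (Fin (k+1))) (fun j => m j = 1)
  have hcards : ∀ m : Fin (k+1) → ℕ,
      (Finset.univ.filter (fun j => ¬ m j = 1)).card = (k+1) - c m := by
    intro m
    have h := Finset.card_filter_add_card_filter_not
      (s := (Finset.univ : Finset (Fin (k+1)))) (fun j => m j = 1)
    rw [Finset.card_univ, Fintype.card_fin] at h
    have : (Finset.univ.filter (fun j => m j = 1)).card = c m := rfl
    omega
  have hge : ∀ m ∈ S, i ≤ c m := by
    intro m hm
    obtain ⟨hsum, hpos⟩ := hmem m hm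
    have h2 : ∀ j ∈ Finset.univ.filter (fun j => ¬ m j = 1), 2 ≤ m j := by
      intro j hj
      have h1 := (Finset.mem_filter.mp hj).2
      have h0 := hpos j
      omega
    have hle2 := Finset.card_nsmul_le_sum _ _ 2 h2
    rw [smul_eq_mul, hcards m] at hle2
    have hea : (Finset.univ.filter (fun j => ¬ m j = 1)).sum m
        = ∑ j ∈ Finset.univ.filter (fun j => ¬ m j = 1), m j := rfl
    rw [hea] at hle2
    have h3 := hsplit m
    rw [hones_sum m, hsum] at h3
    have h4 := hcle m
    omega
  have hprod : ∀ m : Fin (k+1) → ℕ,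
      (∏ j, (X ((m j).toPNat') : A))
        = X 1 ^ (c m) * ∏ j ∈ Finset.univ.filter (fun j => ¬ m j = 1), X ((m j).toPNat') := by
    intro m
    rw [← Finset.prod_filter_mul_prod_filter_not Finset.univ (fun j => m j = 1)
      (fun j => (X ((m j).toPNat') : A))]
    congr 1
    calc ∏ j ∈ Finset.univ.filter (fun j => m j = 1), (X ((m j).toPNat') : A)
        = ∏ _j ∈ Finset.univ.filter (fun j => m j = 1), (X 1 : A) :=
          Finset.prod_congr rfl (fun j hj => by rw [(Finset.mem_filter.mp hj).2]; rfl)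
      _ = X 1 ^ (c m) := by rw [Finset.prod_const]
  have hall2 : ∀ m ∈ S.filter (fun m => c m = i), ∀ j, ¬ m j = 1 → m j = 2 := by
    intro m hm j hj1
    obtain ⟨hmS, hci⟩ := Finset.mem_filter.mp hm
    obtain ⟨hsum, hpos⟩ := hmem m hmS
    have h2 : ∀ j' ∈ Finset.univ.filter (fun j' => ¬ m j' = 1), 2 ≤ m j' := by
      intro j' hj'
      have h1 := (Finset.mem_filter.mp hj').2
      have h0 := hpos j'
      omega
    have hnsum : ∑ j' ∈ Finset.univ.filter (fun j' => ¬ m j' = 1), m j'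
        = 2 * (Finset.univ.filter (fun j' => ¬ m j' = 1)).card := by
      have h1 := hsplit m
      rw [hones_sum m, hsum, hci] at h1
      rw [hcards m, hci]
      omega
    have hkey := (Finset.sum_eq_sum_iff_of_le (f := fun _ => (2:ℕ)) (g := m) h2).mp
    simp only [Finset.sum_const, smul_eq_mul] at hkey
    exact (hkey (by rw [hnsum]; ring) j
      (Finset.mem_filter.mpr ⟨Finset.mem_univ j, hj1⟩)).symm
  -- the divisible part
  have hdvd : (X 1 : A) ^ (i+1) ∣ ∑ m ∈ S.filter (fun m => ¬ c m = i), ∏ j, X ((m j).toPNat') := by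
    apply Finset.dvd_sum
    intro m hm
    obtain ⟨hmS, hne⟩ := Finset.mem_filter.mp hm
    rw [hprod m]
    have h1 : i + 1 ≤ c m := by
      have := hge m hmS
      omega
    exact Dvd.dvd.mul_right (pow_dvd_pow _ h1) _
  obtain ⟨d, hd⟩ := hdvd
  -- the cardinality computation
  have hcard : (S.filter (fun m => c m = i)).card = Nat.choose (k+1) i := by
    have hpc : (Finset.powersetCard i (Finset.univ : Finset (Fin (k+1)))).card
        = Nat.choose (k+1) i := by
      rw [Finset.card_powersetCard, Finset.card_univ, Fintype.card_fin]
    rw [← hpc]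
    refine Finset.card_bij' (fun m _ => Finset.univ.filter (fun j => m j = 1))
      (fun s _ => fun j => if j ∈ s then 1 else 2) ?_ ?_ ?_ ?_
    · intro m hm
      rw [Finset.mem_powersetCard]
      exact ⟨Finset.filter_subset _ _, (Finset.mem_filter.mp hm).2⟩
    · intro s hs
      have hsc : s.card = i := (Finset.mem_powersetCard.mp hs).2
      have h1 : Finset.univ.filter (fun j : Fin (k+1) => j ∈ s) = s := by
        ext j; simp
      have h2 : (Finset.univ.filter (fun j : Fin (k+1) => ¬ j ∈ s)).card = (k+1) - i := by
        have h := Finset.card_filter_add_card_filter_not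
          (s := (Finset.univ : Finset (Fin (k+1)))) (fun j => j ∈ s)
        rw [Finset.card_univ, Fintype.card_fin, h1, hsc] at h
        omega
      have hcset : Finset.univ.filter
          (fun j : Fin (k+1) => (if j ∈ s then (1:ℕ) else 2) = 1) = s := by
        ext j
        by_cases h : j ∈ s <;> simp [h]
      refine Finset.mem_filter.mpr ⟨Finset.mem_filter.mpr ⟨?_, ?_⟩, ?_⟩
      · rw [Finset.Nat.mem_antidiagonalTuple]
        show ∑ j : Fin (k+1), (if j ∈ s then (1:ℕ) else 2) = t
        rw [Finset.sum_ite, Finset.sum_const, Finset.sum_const, h1, hsc]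
        simp only [smul_eq_mul, h2]
        omega
      · intro j
        show 1 ≤ (if j ∈ s then (1:ℕ) else 2)
        by_cases h : j ∈ s <;> simp [h]
      · show (Finset.univ.filter
          (fun j : Fin (k+1) => (if j ∈ s then (1:ℕ) else 2) = 1)).card = i
        rw [hcset, hsc]
    · intro m hm
      funext j
      show (if j ∈ Finset.univ.filter (fun j => m j = 1) then (1:ℕ) else 2) = m j
      by_cases h : m j = 1
      · simp [h]
      · simp only [Finset.mem_filter, Finset.mem_univ, true_and, h, if_false]
        exact (hall2 m hm j h).symm
    · intro s hs
      show Finset.univ.filter (fun j : Fin (k+1) => (if j ∈ s then (1:ℕ) else 2) = 1) = s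
      ext j
      by_cases h : j ∈ s <;> simp [h]
  -- the main part
  have hpart1 : ∑ m ∈ S.filter (fun m => c m = i), ∏ j, (X ((m j).toPNat') : A)
      = (Nat.choose (k+1) i) • (X 1 ^ i * X 2 ^ (k+1-i)) := by
    have hterm : ∀ m ∈ S.filter (fun m => c m = i),
        ∏ j, (X ((m j).toPNat') : A) = X 1 ^ i * X 2 ^ (k+1-i) := by
      intro m hm
      obtain ⟨hmS, hci⟩ := Finset.mem_filter.mp hm
      rw [hprod m, hci]
      congr 1
      calc ∏ j ∈ Finset.univ.filter (fun j => ¬ m j = 1), (X ((m j).toPNat') : A)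
          = ∏ _j ∈ Finset.univ.filter (fun j => ¬ m j = 1), (X 2 : A) :=
            Finset.prod_congr rfl (fun j hj => by
              rw [hall2 m hm j (Finset.mem_filter.mp hj).2]; rfl)
        _ = X 2 ^ (k+1-i) := by rw [Finset.prod_const, hcards m, hci]
    rw [Finset.sum_congr rfl hterm, Finset.sum_const, hcard]
  have hR0 : R0 k t = ∑ m ∈ S, ∏ j, (X ((m j).toPNat') : A) := rfl
  have hsplitR : R0 k t = (Nat.choose (k+1) i) • (X 1 ^ i * X 2 ^ (k+1-i)) + d * X 1 ^ (i+1) := by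
    rw [hR0, ← Finset.sum_filter_add_sum_filter_not S (fun m => c m = i), hpart1, hd]
    ring
  set C := Nat.choose (k+1) i with hCdef
  have hCpos : 0 < C := Nat.choose_pos (le_trans hi (Nat.le_succ k))
  have hCne : (C : ℂ) ≠ 0 := Nat.cast_ne_zero.mpr hCpos.ne'
  refine ⟨(C:ℂ)⁻¹, inv_ne_zero hCne, -((C:ℂ)⁻¹ • d), ?_⟩
  have hk1 : k - i + 1 = k + 1 - i := by omega
  rw [hk1, mul_comm]
  have final : (C:ℂ)⁻¹ • R0 k t + (-((C:ℂ)⁻¹ • d)) * X 1 ^ (i+1)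
      = X 1 ^ i * X 2 ^ (k+1-i) := by
    rw [hsplitR, neg_mul, ← sub_eq_add_neg, smul_add, smul_mul_assoc,
      add_sub_cancel_right, ← Nat.cast_smul_eq_nsmul ℂ, smul_smul,
      inv_mul_cancel₀ hCne, one_smul]
  exact final.symm
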